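/- Over the polar triangle family Q₁Q₂Q₃, the circumcenter has constant x-coordinate equal to (√2 − 1)f. -/

import Mathlib

set_option maxHeartbeats 4000000 in
/-- Over the polar triangle family `Q₁Q₂Q₃`, the circumcenter has constant abscissa
`(√2 − 1)f`. -/
theorem polar_circumcenter_line (f y₁ Δ : ℝ) (hf : 0 < f) (Q₁ Q₂ Q₃ O : ℝ × ℝ)
    (hΔ : Δ = Real.sqrt (y₁ ^ 4 + 8 * f ^ 2 * y₁ ^ 2 + 16 * (8 * Real.sqrt 2 - 11) * f ^ 4))
    (hden₁ : 2 * (2 * Real.sqrt 2 + 3) * y₁ ^ 2 - 8 * f ^ 2 ≠ 0)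
    (hden₃ : (3 + 2 * Real.sqrt 2) * y₁ ^ 2 - 4 * f ^ 2 ≠ 0)
    (hQ₁ : Q₁ = ((1 + Real.sqrt 2) * ((4 * f * y₁ + Δ) * y₁ /
        (2 * (2 * Real.sqrt 2 + 3) * y₁ ^ 2 - 8 * f ^ 2)),
      (1 + Real.sqrt 2) * (((1 + Real.sqrt 2) * y₁ ^ 3 - 4 * (1 + Real.sqrt 2) * f ^ 2 * y₁ -
        2 * Δ * f) / (2 * (2 * Real.sqrt 2 + 3) * y₁ ^ 2 - 8 * f ^ 2))))
    (hQ₂ : Q₂ = ((1 + Real.sqrt 2) * ((4 * f * y₁ - Δ) * y₁ /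
        (2 * (2 * Real.sqrt 2 + 3) * y₁ ^ 2 - 8 * f ^ 2)),
      (1 + Real.sqrt 2) * (((1 + Real.sqrt 2) * y₁ ^ 3 - 4 * (1 + Real.sqrt 2) * f ^ 2 * y₁ +
        2 * Δ * f) / (2 * (2 * Real.sqrt 2 + 3) * y₁ ^ 2 - 8 * f ^ 2))))
    (hQ₃ : Q₃ = ((1 + Real.sqrt 2) * ((5 - 3 * Real.sqrt 2) *
        ((1 + 2 * Real.sqrt 2) * y₁ ^ 2 - 28 * f ^ 2) * f /
        (7 * ((3 + 2 * Real.sqrt 2) * y₁ ^ 2 - 4 * f ^ 2))),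
      (1 + Real.sqrt 2) * (-(8 * f ^ 2 * y₁) /
        ((3 + 2 * Real.sqrt 2) * y₁ ^ 2 - 4 * f ^ 2))))
    (hO₁ : (O.1 - Q₁.1) ^ 2 + (O.2 - Q₁.2) ^ 2 = (O.1 - Q₂.1) ^ 2 + (O.2 - Q₂.2) ^ 2)
    (hO₂ : (O.1 - Q₁.1) ^ 2 + (O.2 - Q₁.2) ^ 2 = (O.1 - Q₃.1) ^ 2 + (O.2 - Q₃.2) ^ 2) :
    O.1 = (Real.sqrt 2 - 1) * f := by
  set s : ℝ := Real.sqrt 2 with hsdef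
  have hs : s ^ 2 = 2 := Real.sq_sqrt (by norm_num)
  have hs0 : 0 ≤ s := Real.sqrt_nonneg 2
  have hs1 : (11:ℝ)/8 < s := by nlinarith [hs, hs0]
  have hEpos : 0 < y₁ ^ 4 + 8 * f ^ 2 * y₁ ^ 2 + 16 * (8 * s - 11) * f ^ 4 := by
    nlinarith [pow_pos hf 4, sq_nonneg y₁, sq_nonneg (y₁^2), sq_nonneg (f*y₁),
      mul_pos (pow_pos hf 4) (sub_pos.2 hs1)]
  have hΔpos : 0 < Δ := by rw [hΔ]; exact Real.sqrt_pos.mpr hEpos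
  have hE2 : Δ ^ 2 = y₁ ^ 4 + 8 * f ^ 2 * y₁ ^ 2 + 16 * (8 * s - 11) * f ^ 4 := by
    rw [hΔ]; exact Real.sq_sqrt hEpos.le
  set D1 : ℝ := 2 * (2 * s + 3) * y₁ ^ 2 - 8 * f ^ 2 with hD1def
  set D3 : ℝ := (3 + 2 * s) * y₁ ^ 2 - 4 * f ^ 2 with hD3def
  have e11 : Q₁.1 * D1 = (1 + s) * ((4 * f * y₁ + Δ) * y₁) := by
    rw [hQ₁]; field_simp
  have e12 : Q₁.2 * D1 = (1 + s) * ((1 + s) * y₁ ^ 3 - 4 * (1 + s) * f ^ 2 * y₁ - 2 * Δ * f) := by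
    rw [hQ₁]; field_simp
  have e21 : Q₂.1 * D1 = (1 + s) * ((4 * f * y₁ - Δ) * y₁) := by
    rw [hQ₂]; field_simp
  have e22 : Q₂.2 * D1 = (1 + s) * ((1 + s) * y₁ ^ 3 - 4 * (1 + s) * f ^ 2 * y₁ + 2 * Δ * f) := by
    rw [hQ₂]; field_simp
  have e31 : Q₃.1 * (7 * D3) = (1 + s) * ((5 - 3 * s) * ((1 + 2 * s) * y₁ ^ 2 - 28 * f ^ 2) * f) := by
    rw [hQ₃]; field_simp
  have e32 : Q₃.2 * (7 * D3) = 7 * ((1 + s) * (-(8 * f ^ 2 * y₁))) := by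
    rw [hQ₃]; field_simp
  have h1 : (O.1 * D1 - (1 + s) * ((4 * f * y₁ + Δ) * y₁)) ^ 2 +
      (O.2 * D1 - (1 + s) * ((1 + s) * y₁ ^ 3 - 4 * (1 + s) * f ^ 2 * y₁ - 2 * Δ * f)) ^ 2 =
      (O.1 * D1 - (1 + s) * ((4 * f * y₁ - Δ) * y₁)) ^ 2 +
      (O.2 * D1 - (1 + s) * ((1 + s) * y₁ ^ 3 - 4 * (1 + s) * f ^ 2 * y₁ + 2 * Δ * f)) ^ 2 := by
    rw [← e11, ← e12, ← e21, ← e22]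
    linear_combination D1 ^ 2 * hO₁
  have h2 : (7 * D3) ^ 2 * ((O.1 * D1 - (1 + s) * ((4 * f * y₁ + Δ) * y₁)) ^ 2 +
      (O.2 * D1 - (1 + s) * ((1 + s) * y₁ ^ 3 - 4 * (1 + s) * f ^ 2 * y₁ - 2 * Δ * f)) ^ 2) =
      D1 ^ 2 * ((O.1 * (7 * D3) - (1 + s) * ((5 - 3 * s) * ((1 + 2 * s) * y₁ ^ 2 - 28 * f ^ 2) * f)) ^ 2 +
      (O.2 * (7 * D3) - 7 * ((1 + s) * (-(8 * f ^ 2 * y₁)))) ^ 2) := by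
    rw [← e11, ← e12, ← e31, ← e32]
    linear_combination (D1 ^ 2 * (7 * D3) ^ 2) * hO₂
  have hq : 0 < (8119 + 5741 * s) * y₁ ^ 4 + (42664 + 30168 * s) * (y₁ ^ 2 * f ^ 2) +
      (40752 + 28816 * s) * f ^ 4 := by positivity
  have key : (O.1 - (s - 1) * f) * (1568 * (Δ * (D3 ^ 4 *
      ((8119 + 5741 * s) * y₁ ^ 4 + (42664 + 30168 * s) * (y₁ ^ 2 * f ^ 2) +
      (40752 + 28816 * s) * f ^ 4)))) = 0 := by
    simp only [hD1def, hD3def] at h1 h2 ⊢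
    linear_combination ((3 + 2*s)^4 * ((-113092:ℝ)*y₁^9 + (93688:ℝ)*f*y₁^6*Δ + (-64288:ℝ)*f^2*y₁^7 + (-192864:ℝ)*f^3*y₁^4*Δ + (451584:ℝ)*f^4*y₁^5 + (131712:ℝ)*f^5*y₁^2*Δ + (-376320:ℝ)*f^6*y₁^3 + (-25088:ℝ)*f^7*Δ + (50176:ℝ)*f^8*y₁ + (-79968:ℝ)*s*y₁^9 + (66248:ℝ)*s*f*y₁^6*Δ + (-45472:ℝ)*s*f^2*y₁^7 + (-136416:ℝ)*s*f^3*y₁^4*Δ + (319872:ℝ)*s*f^4*y₁^5 + (94080:ℝ)*s*f^5*y₁^2*Δ + (-275968:ℝ)*s*f^6*y₁^3 + (-25088:ℝ)*s*f^7*Δ + (100352:ℝ)*s*f^8*y₁)) * h1 + (-((3 + 2*s)^4) * ((112:ℝ)*f*y₁^2*Δ + (-64:ℝ)*f^3*Δ + (80:ℝ)*s*f*y₁^2*Δ + (-64:ℝ)*s*f^3*Δ)) * h2 + ((-405663552:ℝ)*y₁^12*Δ*O.1 + (628147856:ℝ)*f*y₁^8*Δ^3 + (-67060224:ℝ)*f*y₁^9*Δ^2*O.1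 + (-195846336:ℝ)*f*y₁^11*Δ*O.2 + (-1184379392:ℝ)*f*y₁^12*Δ + (134120448:ℝ)*f^2*y₁^8*Δ^2*O.2 + (22353408:ℝ)*f^2*y₁^9*Δ^2 + (18119808:ℝ)*f^2*y₁^10*Δ*O.1 + (1221672704:ℝ)*f^3*y₁^6*Δ^3 + (199148544:ℝ)*f^3*y₁^7*Δ^2*O.1 + (346477824:ℝ)*f^3*y₁^9*Δ*O.2 + (-6396749184:ℝ)*f^3*y₁^10*Δ + (-398297088:ℝ)*f^4*y₁^6*Δ^2*O.2 + (52835328:ℝ)*f^4*y₁^7*Δ^2 + (6518002176:ℝ)*f^4*y₁^8*Δ*O.1 + (-4279887360:ℝ)*f^5*y₁^4*Δ^3 + (-195084288:ℝ)*f^5*y₁^5*Δ^2*O.1 + (-89413632:ℝ)*f^5*y₁^7*Δ*O.2 + (112128428544:ℝ)*f^5*y₁^8*Δ + (390168576:ℝ)*f^6*y₁^4*Δ^2*O.2 + (-130056192:ℝ)*f^6*y₁^5*Δ^2 + (-13176877056:ℝ)*f^6*y₁^6*Δ*O.1 + (3333492736:ℝ)*f^7*y₁^2*Δ^3 + (65028096:ℝ)*f^7*y₁^3*Δ^2*O.1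 + (162570240:ℝ)*f^7*y₁^5*Δ*O.2 + (238921789440:ℝ)*f^7*y₁^6*Δ + (-130056192:ℝ)*f^8*y₁^2*Δ^2*O.2 + (65028096:ℝ)*f^8*y₁^3*Δ^2 + (2899312640:ℝ)*f^8*y₁^4*Δ*O.1 + (-806629376:ℝ)*f^9*Δ^3 + (-455196672:ℝ)*f^9*y₁^3*Δ*O.2 + (-796244525056:ℝ)*f^9*y₁^4*Δ + (10920820736:ℝ)*f^10*y₁^2*Δ*O.1 + (260112384:ℝ)*f^11*y₁*Δ*O.2 + (623855697920:ℝ)*f^11*y₁^2*Δ + (-6878527488:ℝ)*f^12*Δ*O.1 + (-154827882496:ℝ)*f^13*Δ + (-1185408000:ℝ)*s*y₁^12*Δ*O.1 + (432150992:ℝ)*s*f*y₁^8*Δ^3 + (-305835264:ℝ)*s*f*y₁^9*Δ^2*O.1 + (-930968640:ℝ)*s*f*y₁^11*Δ*O.2 + (-1847168288:ℝ)*s*f*y₁^12*Δ + (611670528:ℝ)*s*f^2*y₁^8*Δ^2*O.2 + (87042816:ℝ)*s*f^2*y₁^9*Δ^2 + (-1676868480:ℝ)*s*f^2*y₁^10*Δ*O.1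 + (851467904:ℝ)*s*f^3*y₁^6*Δ^3 + (835881984:ℝ)*s*f^3*y₁^7*Δ^2*O.1 + (1644330240:ℝ)*s*f^3*y₁^9*Δ*O.2 + (-7175396736:ℝ)*s*f^3*y₁^10*Δ + (-1671763968:ℝ)*s*f^4*y₁^6*Δ^2*O.2 + (388813824:ℝ)*s*f^4*y₁^7*Δ^2 + (20711222784:ℝ)*s*f^4*y₁^8*Δ*O.1 + (-2917383168:ℝ)*s*f^5*y₁^4*Δ^3 + (-764080128:ℝ)*s*f^5*y₁^5*Δ^2*O.1 + (-929359872:ℝ)*s*f^5*y₁^7*Δ*O.2 + (8284454912:ℝ)*s*f^5*y₁^8*Δ + (1528160256:ℝ)*s*f^6*y₁^4*Δ^2*O.2 + (-785756160:ℝ)*s*f^6*y₁^5*Δ^2 + (-31302971392:ℝ)*s*f^6*y₁^6*Δ*O.1 + (2232129536:ℝ)*s*f^7*y₁^2*Δ^3 + (238436352:ℝ)*s*f^7*y₁^3*Δ^2*O.1 + (1376428032:ℝ)*s*f^7*y₁^5*Δ*O.2 + (29436432384:ℝ)*s*f^7*y₁^6*Δ + (-476872704:ℝ)*s*f^8*y₁^2*Δ^2*O.2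 + (368492544:ℝ)*s*f^8*y₁^3*Δ^2 + (8601255936:ℝ)*s*f^8*y₁^4*Δ*O.1 + (-530059264:ℝ)*s*f^9*Δ^3 + (-2059223040:ℝ)*s*f^9*y₁^3*Δ*O.2 + (-72771117056:ℝ)*s*f^9*y₁^4*Δ + (5891063808:ℝ)*s*f^10*y₁^2*Δ*O.1 + (953745408:ℝ)*s*f^11*y₁*Δ*O.2 + (52497514496:ℝ)*s*f^11*y₁^2*Δ + (-494534656:ℝ)*s*f^12*Δ*O.1 + (-9235595264:ℝ)*s*f^13*Δ + (-1358138880:ℝ)*s^2*y₁^12*Δ*O.1 + (274161664:ℝ)*s^2*f*y₁^8*Δ^3 + (-587623680:ℝ)*s^2*f*y₁^9*Δ^2*O.1 + (-1895128704:ℝ)*s^2*f*y₁^11*Δ*O.2 + (-1522375120:ℝ)*s^2*f*y₁^12*Δ + (1175247360:ℝ)*s^2*f^2*y₁^8*Δ^2*O.2 + (115492608:ℝ)*s^2*f^2*y₁^9*Δ^2 + (-4404718080:ℝ)*s^2*f^2*y₁^10*Δ*O.1 + (560879872:ℝ)*s^2*f^3*y₁^6*Δ^3 + (1457713152:ℝ)*s^2*f^3*y₁^7*Δ^2*O.1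 + (3450553344:ℝ)*s^2*f^3*y₁^9*Δ*O.2 + (-8750102784:ℝ)*s^2*f^3*y₁^10*Δ + (-2915426304:ℝ)*s^2*f^4*y₁^6*Δ^2*O.2 + (1163731968:ℝ)*s^2*f^4*y₁^7*Δ^2 + (28664315904:ℝ)*s^2*f^4*y₁^8*Δ*O.1 + (-1798207488:ℝ)*s^2*f^5*y₁^4*Δ^3 + (-1219276800:ℝ)*s^2*f^5*y₁^5*Δ^2*O.1 + (-3056320512:ℝ)*s^2*f^5*y₁^7*Δ*O.2 + (3044895488:ℝ)*s^2*f^5*y₁^8*Δ + (2438553600:ℝ)*s^2*f^6*y₁^4*Δ^2*O.2 + (-2021289984:ℝ)*s^2*f^6*y₁^5*Δ^2 + (-43763793920:ℝ)*s^2*f^6*y₁^6*Δ*O.1 + (1306382336:ℝ)*s^2*f^7*y₁^2*Δ^3 + (346816512:ℝ)*s^2*f^7*y₁^3*Δ^2*O.1 + (3923361792:ℝ)*s^2*f^7*y₁^5*Δ*O.2 + (62618177536:ℝ)*s^2*f^7*y₁^6*Δ + (-693633024:ℝ)*s^2*f^8*y₁^2*Δ^2*O.2 + (888717312:ℝ)*s^2*f^8*y₁^3*Δ^2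 + (34818359296:ℝ)*s^2*f^8*y₁^4*Δ*O.1 + (-292225024:ℝ)*s^2*f^9*Δ^3 + (-3858333696:ℝ)*s^2*f^9*y₁^3*Δ*O.2 + (-114651607040:ℝ)*s^2*f^9*y₁^4*Δ + (-19837353984:ℝ)*s^2*f^10*y₁^2*Δ*O.1 + (1387266048:ℝ)*s^2*f^11*y₁*Δ*O.2 + (76286787584:ℝ)*s^2*f^11*y₁^2*Δ + (4624220160:ℝ)*s^2*f^12*Δ*O.1 + (-21383806976:ℝ)*s^2*f^13*Δ + (-757155840:ℝ)*s^3*y₁^12*Δ*O.1 + (147163072:ℝ)*s^3*f*y₁^8*Δ^3 + (-615283200:ℝ)*s^3*f*y₁^9*Δ^2*O.1 + (-2156878080:ℝ)*s^3*f*y₁^11*Δ*O.2 + (-440977264:ℝ)*s^3*f*y₁^12*Δ + (1230566400:ℝ)*s^3*f^2*y₁^8*Δ^2*O.2 + (26154240:ℝ)*s^3*f^2*y₁^9*Δ^2 + (-4831998976:ℝ)*s^3*f^2*y₁^10*Δ*O.1 + (321728512:ℝ)*s^3*f^3*y₁^6*Δ^3 + (1360472064:ℝ)*s^3*f^3*y₁^7*Δ^2*O.1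 + (4226976768:ℝ)*s^3*f^3*y₁^9*Δ*O.2 + (-6902272384:ℝ)*s^3*f^3*y₁^10*Δ + (-2720944128:ℝ)*s^3*f^4*y₁^6*Δ^2*O.2 + (1879342080:ℝ)*s^3*f^4*y₁^7*Δ^2 + (26401034240:ℝ)*s^3*f^4*y₁^8*Δ*O.1 + (-910844928:ℝ)*s^3*f^5*y₁^4*Δ^3 + (-1011548160:ℝ)*s^3*f^5*y₁^5*Δ^2*O.1 + (-4955983872:ℝ)*s^3*f^5*y₁^7*Δ*O.2 + (-5246797056:ℝ)*s^3*f^5*y₁^8*Δ + (2023096320:ℝ)*s^3*f^6*y₁^4*Δ^2*O.2 + (-2879901696:ℝ)*s^3*f^6*y₁^5*Δ^2 + (-50486804480:ℝ)*s^3*f^6*y₁^6*Δ*O.1 + (598097920:ℝ)*s^3*f^7*y₁^2*Δ^3 + (250478592:ℝ)*s^3*f^7*y₁^3*Δ^2*O.1 + (5503303680:ℝ)*s^3*f^7*y₁^5*Δ*O.2 + (65229381632:ℝ)*s^3*f^7*y₁^6*Δ + (-500957184:ℝ)*s^3*f^8*y₁^2*Δ^2*O.2 + (1182547968:ℝ)*s^3*f^8*y₁^3*Δ^2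 + (51714195456:ℝ)*s^3*f^8*y₁^4*Δ*O.1 + (-117211136:ℝ)*s^3*f^9*Δ^3 + (-3834249216:ℝ)*s^3*f^9*y₁^3*Δ*O.2 + (-106884321280:ℝ)*s^3*f^9*y₁^4*Δ + (-25416695808:ℝ)*s^3*f^10*y₁^2*Δ*O.1 + (1001914368:ℝ)*s^3*f^11*y₁*Δ*O.2 + (71895842816:ℝ)*s^3*f^11*y₁^2*Δ + (4675600384:ℝ)*s^3*f^12*Δ*O.1 + (-17055023104:ℝ)*s^3*f^13*Δ + (-202961920:ℝ)*s^4*y₁^12*Δ*O.1 + (60876032:ℝ)*s^4*f*y₁^8*Δ^3 + (-377825280:ℝ)*s^4*f*y₁^9*Δ^2*O.1 + (-1501893120:ℝ)*s^4*f*y₁^11*Δ*O.2 + (174167168:ℝ)*s^4*f*y₁^12*Δ + (755650560:ℝ)*s^4*f^2*y₁^8*Δ^2*O.2 + (-87368960:ℝ)*s^4*f^2*y₁^9*Δ^2 + (-3207350272:ℝ)*s^4*f^2*y₁^10*Δ*O.1 + (145209344:ℝ)*s^4*f^3*y₁^6*Δ^3 + (725745664:ℝ)*s^4*f^3*y₁^7*Δ^2*O.1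 + (3333693440:ℝ)*s^4*f^3*y₁^9*Δ*O.2 + (-3748655872:ℝ)*s^4*f^3*y₁^10*Δ + (-1451491328:ℝ)*s^4*f^4*y₁^6*Δ^2*O.2 + (1802622976:ℝ)*s^4*f^4*y₁^7*Δ^2 + (19576782848:ℝ)*s^4*f^4*y₁^8*Δ*O.1 + (-343605248:ℝ)*s^4*f^5*y₁^4*Δ^3 + (-457605120:ℝ)*s^4*f^5*y₁^5*Δ^2*O.1 + (-4553973760:ℝ)*s^4*f^5*y₁^7*Δ*O.2 + (-4291658752:ℝ)*s^4*f^5*y₁^8*Δ + (915210240:ℝ)*s^4*f^6*y₁^4*Δ^2*O.2 + (-2469662720:ℝ)*s^4*f^6*y₁^5*Δ^2 + (-40398848000:ℝ)*s^4*f^6*y₁^6*Δ*O.1 + (191070208:ℝ)*s^4*f^7*y₁^2*Δ^3 + (89915392:ℝ)*s^4*f^7*y₁^3*Δ^2*O.1 + (4270981120:ℝ)*s^4*f^7*y₁^5*Δ*O.2 + (37445398528:ℝ)*s^4*f^7*y₁^6*Δ + (-179830784:ℝ)*s^4*f^8*y₁^2*Δ^2*O.2 + (937689088:ℝ)*s^4*f^8*y₁^3*Δ^2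 + (36512989184:ℝ)*s^4*f^8*y₁^4*Δ*O.1 + (-28901376:ℝ)*s^4*f^9*Δ^3 + (-2132279296:ℝ)*s^4*f^9*y₁^3*Δ*O.2 + (-51736690688:ℝ)*s^4*f^9*y₁^4*Δ + (-14507573248:ℝ)*s^4*f^10*y₁^2*Δ*O.1 + (359661568:ℝ)*s^4*f^11*y₁*Δ*O.2 + (23339466752:ℝ)*s^4*f^11*y₁^2*Δ + (1952448512:ℝ)*s^4*f^12*Δ*O.1 + (-2620391424:ℝ)*s^4*f^13*Δ + (-20471808:ℝ)*s^5*y₁^12*Δ*O.1 + (17599232:ℝ)*s^5*f*y₁^8*Δ^3 + (-135274496:ℝ)*s^5*f*y₁^9*Δ^2*O.1 + (-657255424:ℝ)*s^5*f*y₁^11*Δ*O.2 + (200387264:ℝ)*s^5*f*y₁^12*Δ + (270548992:ℝ)*s^5*f^2*y₁^8*Δ^2*O.2 + (-101756928:ℝ)*s^5*f^2*y₁^9*Δ^2 + (-1645772800:ℝ)*s^5*f^2*y₁^10*Δ*O.1 + (46262272:ℝ)*s^5*f^3*y₁^6*Δ^3 + (216760320:ℝ)*s^5*f^3*y₁^7*Δ^2*O.1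 + (1737895936:ℝ)*s^5*f^3*y₁^9*Δ*O.2 + (-1762413824:ℝ)*s^5*f^3*y₁^10*Δ + (-433520640:ℝ)*s^5*f^4*y₁^6*Δ^2*O.2 + (1052090368:ℝ)*s^5*f^4*y₁^7*Δ^2 + (10987798528:ℝ)*s^5*f^4*y₁^8*Δ*O.1 + (-87105536:ℝ)*s^5*f^5*y₁^4*Δ^3 + (-105971712:ℝ)*s^5*f^5*y₁^5*Δ^2*O.1 + (-2463039488:ℝ)*s^5*f^5*y₁^7*Δ*O.2 + (-452006912:ℝ)*s^5*f^5*y₁^8*Δ + (211943424:ℝ)*s^5*f^6*y₁^4*Δ^2*O.2 + (-1290928128:ℝ)*s^5*f^6*y₁^5*Δ^2 + (-19901120512:ℝ)*s^5*f^6*y₁^6*Δ*O.1 + (36929536:ℝ)*s^5*f^7*y₁^2*Δ^3 + (12845056:ℝ)*s^5*f^7*y₁^3*Δ^2*O.1 + (1862533120:ℝ)*s^5*f^7*y₁^5*Δ*O.2 + (5181689856:ℝ)*s^5*f^7*y₁^6*Δ + (-25690112:ℝ)*s^5*f^8*y₁^2*Δ^2*O.2 + (443154432:ℝ)*s^5*f^8*y₁^3*Δ^2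 + (14424997888:ℝ)*s^5*f^8*y₁^4*Δ*O.1 + (-3211264:ℝ)*s^5*f^9*Δ^3 + (-629407744:ℝ)*s^5*f^9*y₁^3*Δ*O.2 + (4698013696:ℝ)*s^5*f^9*y₁^4*Δ + (-4158128128:ℝ)*s^5*f^10*y₁^2*Δ*O.1 + (51380224:ℝ)*s^5*f^11*y₁*Δ*O.2 + (-11184373760:ℝ)*s^5*f^11*y₁^2*Δ + (308281344:ℝ)*s^5*f^12*Δ*O.1 + (4290248704:ℝ)*s^5*f^13*Δ + (3110912:ℝ)*s^6*f*y₁^8*Δ^3 + (-25890816:ℝ)*s^6*f*y₁^9*Δ^2*O.1 + (-178124800:ℝ)*s^6*f*y₁^11*Δ*O.2 + (88949504:ℝ)*s^6*f*y₁^12*Δ + (51781632:ℝ)*s^6*f^2*y₁^8*Δ^2*O.2 + (-49473536:ℝ)*s^6*f^2*y₁^9*Δ^2 + (-698048512:ℝ)*s^6*f^2*y₁^10*Δ*O.1 + (9031680:ℝ)*s^6*f^3*y₁^6*Δ^3 + (32112640:ℝ)*s^6*f^3*y₁^7*Δ^2*O.1 + (582041600:ℝ)*s^6*f^3*y₁^9*Δ*O.2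 + (-707394560:ℝ)*s^6*f^3*y₁^10*Δ + (-64225280:ℝ)*s^6*f^4*y₁^6*Δ^2*O.2 + (362872832:ℝ)*s^6*f^4*y₁^7*Δ^2 + (4092985344:ℝ)*s^6*f^4*y₁^8*Δ*O.1 + (-12845056:ℝ)*s^6*f^5*y₁^4*Δ^3 + (-9633792:ℝ)*s^6*f^5*y₁^5*Δ^2*O.1 + (-761069568:ℝ)*s^6*f^5*y₁^7*Δ*O.2 + (1751244800:ℝ)*s^6*f^5*y₁^8*Δ + (19267584:ℝ)*s^6*f^6*y₁^4*Δ^2*O.2 + (-393379840:ℝ)*s^6*f^6*y₁^5*Δ^2 + (-5833490432:ℝ)*s^6*f^6*y₁^6*Δ*O.1 + (3211264:ℝ)*s^6*f^7*y₁^2*Δ^3 + (423886848:ℝ)*s^6*f^7*y₁^5*Δ*O.2 + (-10119479296:ℝ)*s^6*f^7*y₁^6*Δ + (115605504:ℝ)*s^6*f^8*y₁^3*Δ^2 + (3038773248:ℝ)*s^6*f^8*y₁^4*Δ*O.1 + (-77070336:ℝ)*s^6*f^9*y₁^3*Δ*O.2 + (19180355584:ℝ)*s^6*f^9*y₁^4*Δ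 + (-484442112:ℝ)*s^6*f^10*y₁^2*Δ*O.1 + (-12720275456:ℝ)*s^6*f^11*y₁^2*Δ + (2620391424:ℝ)*s^6*f^13*Δ + (250880:ℝ)*s^7*f*y₁^8*Δ^3 + (-2007040:ℝ)*s^7*f*y₁^9*Δ^2*O.1 + (-27897856:ℝ)*s^7*f*y₁^11*Δ*O.2 + (24071936:ℝ)*s^7*f*y₁^12*Δ + (4014080:ℝ)*s^7*f^2*y₁^8*Δ^2*O.2 + (-11440128:ℝ)*s^7*f^2*y₁^9*Δ^2 + (-214351872:ℝ)*s^7*f^2*y₁^10*Δ*O.1 + (802816:ℝ)*s^7*f^3*y₁^6*Δ^3 + (1605632:ℝ)*s^7*f^3*y₁^7*Δ^2*O.1 + (113197056:ℝ)*s^7*f^3*y₁^9*Δ*O.2 + (-237249536:ℝ)*s^7*f^3*y₁^10*Δ + (-3211264:ℝ)*s^7*f^4*y₁^6*Δ^2*O.2 + (66633728:ℝ)*s^7*f^4*y₁^7*Δ^2 + (912457728:ℝ)*s^7*f^4*y₁^8*Δ*O.1 + (-802816:ℝ)*s^7*f^5*y₁^4*Δ^3 + (-118816768:ℝ)*s^7*f^5*y₁^7*Δ*O.2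 + (1905860608:ℝ)*s^7*f^5*y₁^8*Δ + (-61014016:ℝ)*s^7*f^6*y₁^5*Δ^2 + (-910163968:ℝ)*s^7*f^6*y₁^6*Δ*O.1 + (38535168:ℝ)*s^7*f^7*y₁^5*Δ*O.2 + (-8015347712:ℝ)*s^7*f^7*y₁^6*Δ + (12845056:ℝ)*s^7*f^8*y₁^3*Δ^2 + (264241152:ℝ)*s^7*f^8*y₁^4*Δ*O.1 + (9843965952:ℝ)*s^7*f^9*y₁^4*Δ + (-4312268800:ℝ)*s^7*f^11*y₁^2*Δ + (462422016:ℝ)*s^7*f^13*Δ + (-2007040:ℝ)*s^8*f*y₁^11*Δ*O.2 + (3612672:ℝ)*s^8*f*y₁^12*Δ + (-1003520:ℝ)*s^8*f^2*y₁^9*Δ^2 + (-40370176:ℝ)*s^8*f^2*y₁^10*Δ*O.1 + (9633792:ℝ)*s^8*f^3*y₁^9*Δ*O.2 + (-89575424:ℝ)*s^8*f^3*y₁^10*Δ + (4816896:ℝ)*s^8*f^4*y₁^7*Δ^2 + (100007936:ℝ)*s^8*f^4*y₁^8*Δ*O.1 + (-6422528:ℝ)*s^8*f^5*y₁^7*Δ*O.2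 + (956383232:ℝ)*s^8*f^5*y₁^8*Δ + (-3211264:ℝ)*s^8*f^6*y₁^5*Δ^2 + (-55050240:ℝ)*s^8*f^6*y₁^6*Δ*O.1 + (-2666725376:ℝ)*s^8*f^7*y₁^6*Δ + (2197553152:ℝ)*s^8*f^9*y₁^4*Δ + (-528482304:ℝ)*s^8*f^11*y₁^2*Δ + (250880:ℝ)*s^9*f*y₁^12*Δ + (-3440640:ℝ)*s^9*f^2*y₁^10*Δ*O.1 + (-32370688:ℝ)*s^9*f^3*y₁^10*Δ + (2752512:ℝ)*s^9*f^4*y₁^8*Δ*O.1 + (250462208:ℝ)*s^9*f^5*y₁^8*Δ + (-403898368:ℝ)*s^9*f^7*y₁^6*Δ + (184025088:ℝ)*s^9*f^9*y₁^4*Δ + (-7421952:ℝ)*s^10*f^3*y₁^10*Δ + (29294592:ℝ)*s^10*f^5*y₁^8*Δ + (-18874368:ℝ)*s^10*f^7*y₁^6*Δ + (-737280:ℝ)*s^11*f^3*y₁^10*Δ + (589824:ℝ)*s^11*f^5*y₁^8*Δ) * hs + ((1260296464:ℝ)*f*y₁^8*Δ + (2446393600:ℝ)*f^3*y₁^6*Δ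 + (-8598385152:ℝ)*f^5*y₁^4*Δ + (6715756544:ℝ)*f^7*y₁^2*Δ + (-1629515776:ℝ)*f^9*Δ + (891164176:ℝ)*s*f*y₁^8*Δ + (1729861504:ℝ)*s*f^3*y₁^6*Δ + (-6079976448:ℝ)*s*f^5*y₁^4*Δ + (4748756992:ℝ)*s*f^7*y₁^2*Δ + (-1152241664:ℝ)*s*f^9*Δ) * hE2
  have hne : (1568:ℝ) * (Δ * (D3 ^ 4 *
      ((8119 + 5741 * s) * y₁ ^ 4 + (42664 + 30168 * s) * (y₁ ^ 2 * f ^ 2) +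
      (40752 + 28816 * s) * f ^ 4))) ≠ 0 := by
    refine mul_ne_zero (by norm_num) (mul_ne_zero (ne_of_gt hΔpos)
      (mul_ne_zero (pow_ne_zero 4 hden₃) (ne_of_gt hq)))
  have h0 : O.1 - (s - 1) * f = 0 := by
    rcases mul_eq_zero.mp key with h | h
    · exact h
    · exact absurd h hne
  linarith [h0]
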